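/- In the setting of two finite-dimensional inner product spaces (H₁, D₁) and (H₂, D₂) with positive semidefinite symmetric forms, orthonormal eigenbases {f_i} of D₁ and {u_i} of D₂, linear maps Q₁ : H₁ → H₂ and Q₂ : H₂ → H₁, and l ≤ min{dim H₁, dim H₂}, define E₁ := sup over nonzero u ∈ span{u₁,…,u_l} of (D₁(Q₂u, Q₂u)/‖Q₂u‖₁² − D₂(u,u)/‖u‖₂²) and E₂ := sup over nonzero f ∈ span{f₁,…,f_l} of (D₂(Q₁f, Q₁f)/‖Q₁f‖₂² − D₁(f,f)/‖f‖₁²). Then for all j ∈ {1, …, l}: λⱼ(D₁) ≤ λⱼ(D₂) + E₁ and λⱼ(D₂) ≤ λⱼ(D₁) + E₂. -/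

import Mathlib

lemma D_expand {H : Type*} [NormedAddCommGroup H] [InnerProductSpace ℝ H] {n : ℕ}
    (D : H →ₗ[ℝ] H →ₗ[ℝ] ℝ) (b : OrthonormalBasis (Fin n) ℝ H) (lam : Fin n → ℝ)
    (heig : ∀ i v, D (b i) v = lam i * (inner ℝ (b i) v : ℝ)) (w : H) :
    D w w = ∑ i, lam i * (inner ℝ (b i) w : ℝ) ^ 2 := by
  have h := congrArg (fun x => D x w) (b.sum_repr' w)
  simp only [map_sum, map_smul, LinearMap.sum_apply, LinearMap.smul_apply, smul_eq_mul] at h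
  rw [← h]
  congr 1; ext i
  rw [heig]; ring

lemma norm_expand {H : Type*} [NormedAddCommGroup H] [InnerProductSpace ℝ H] {n : ℕ}
    (b : OrthonormalBasis (Fin n) ℝ H) (w : H) :
    ‖w‖ ^ 2 = ∑ i, (inner ℝ (b i) w : ℝ) ^ 2 := by
  have h := b.sum_inner_mul_inner w w
  rw [← real_inner_self_eq_norm_sq, ← h]
  congr 1; ext i
  rw [real_inner_comm w (b i)]; ring

lemma eig_comp_aux {H₁ H₂ : Type*}
    [NormedAddCommGroup H₁] [InnerProductSpace ℝ H₁] [FiniteDimensional ℝ H₁]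
    [NormedAddCommGroup H₂] [InnerProductSpace ℝ H₂] [FiniteDimensional ℝ H₂]
    {n₁ n₂ : ℕ}
    (D₁ : H₁ →ₗ[ℝ] H₁ →ₗ[ℝ] ℝ) (D₂ : H₂ →ₗ[ℝ] H₂ →ₗ[ℝ] ℝ)
    (f : OrthonormalBasis (Fin n₁) ℝ H₁) (u : OrthonormalBasis (Fin n₂) ℝ H₂)
    (lam1 : Fin n₁ → ℝ) (lam2 : Fin n₂ → ℝ) (hmono₁ : Monotone lam1) (hmono₂ : Monotone lam2)
    (heig₁ : ∀ i v, D₁ (f i) v = lam1 i * (inner ℝ (f i) v : ℝ))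
    (heig₂ : ∀ i v, D₂ (u i) v = lam2 i * (inner ℝ (u i) v : ℝ))
    (l : ℕ) (hln₁ : l ≤ n₁) (hln₂ : l ≤ n₂)
    (Q₂ : H₂ →ₗ[ℝ] H₁) (E₁ : ℝ)
    (hinj₂ : ∀ v ∈ Submodule.span ℝ ((fun i => u i) '' {i : Fin n₂ | (i : ℕ) < l}),
      Q₂ v = 0 → v = 0)
    (hE₁ : ∀ v ∈ Submodule.span ℝ ((fun i => u i) '' {i : Fin n₂ | (i : ℕ) < l}), v ≠ 0 →
      D₁ (Q₂ v) (Q₂ v) / ‖Q₂ v‖ ^ 2 - D₂ v v / ‖v‖ ^ 2 ≤ E₁)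
    (j : ℕ) (hj : j < l) :
    lam1 ⟨j, by omega⟩ ≤ lam2 ⟨j, by omega⟩ + E₁ := by
  set emb : Fin (j+1) → Fin n₂ := fun k => ⟨k, by omega⟩ with hemb
  have hembinj : Function.Injective emb := by
    intro a b hab
    simpa [hemb, Fin.ext_iff] using hab
  set S : (Fin (j+1) → ℝ) →ₗ[ℝ] H₂ :=
    ∑ k, (LinearMap.proj k : (Fin (j+1) → ℝ) →ₗ[ℝ] ℝ).smulRight (u (emb k)) with hSdef
  have hS : ∀ c, S c = ∑ k, c k • u (emb k) := by
    intro c; simp [hSdef, LinearMap.sum_apply]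
  set T : (Fin (j+1) → ℝ) →ₗ[ℝ] (Fin j → ℝ) :=
    LinearMap.pi fun i : Fin j => (innerₛₗ ℝ (f ⟨i, by omega⟩)) ∘ₗ (Q₂ ∘ₗ S) with hTdef
  have hTnotinj : ¬ Function.Injective T := by
    intro h
    have := LinearMap.finrank_le_finrank_of_injective h
    simp [Module.finrank_fintype_fun_eq_card] at this
  obtain ⟨a, b, hab, hne⟩ : ∃ a b, T a = T b ∧ a ≠ b := by
    by_contra h
    push_neg at h
    exact hTnotinj fun a b hab => h a b hab
  set c := a - b with hc
  have hc0 : c ≠ 0 := sub_ne_zero_of_ne hne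
  have hTc : T c = 0 := by rw [hc, map_sub, hab, sub_self]
  set v := S c with hv
  have hvspan : v ∈ Submodule.span ℝ ((fun i => u i) '' {i : Fin n₂ | (i : ℕ) < l}) := by
    rw [hv, hS]
    refine Submodule.sum_mem _ fun k _ => Submodule.smul_mem _ _ ?_
    exact Submodule.subset_span ⟨emb k, by simp [hemb]; omega, rfl⟩
  have hv0 : v ≠ 0 := by
    intro h
    have hli := (u.orthonormal.comp emb hembinj).linearIndependent
    refine hc0 (funext (Fintype.linearIndependent_iff.mp hli c ?_))
    show ∑ i : Fin (j+1), c i • (⇑u ∘ emb) i = 0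
    simp only [Function.comp_apply]
    rw [← hS c]
    exact hv ▸ h
  have hcoef : ∀ i : Fin n₂, j < (i : ℕ) → (inner ℝ (u i) v : ℝ) = 0 := by
    intro i hi
    rw [hv, hS, inner_sum]
    refine Finset.sum_eq_zero fun k _ => ?_
    rw [real_inner_smul_right]
    have hne' : i ≠ emb k := by
      intro h
      rw [h] at hi
      simp only [hemb] at hi
      omega
    rw [u.orthonormal.2 hne', mul_zero]
  set w := Q₂ v with hw
  have hw0 : w ≠ 0 := fun h => hv0 (hinj₂ v hvspan h)
  have hfw : ∀ i : Fin n₁, (i : ℕ) < j → (inner ℝ (f i) w : ℝ) = 0 := by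
    intro i hi
    have h := congrFun hTc ⟨(i : ℕ), hi⟩
    simp only [hTdef, LinearMap.pi_apply, LinearMap.comp_apply, innerₛₗ_apply_apply,
      Pi.zero_apply] at h
    have heq : (⟨(i : ℕ), by omega⟩ : Fin n₁) = i := Fin.ext rfl
    rw [heq] at h
    exact h
  -- Rayleigh bounds
  have hvpos : (0:ℝ) < ‖v‖ ^ 2 := pow_pos (norm_pos_iff.mpr hv0) 2
  have hwpos : (0:ℝ) < ‖w‖ ^ 2 := pow_pos (norm_pos_iff.mpr hw0) 2
  have hD2 : D₂ v v ≤ lam2 ⟨j, by omega⟩ * ‖v‖ ^ 2 := by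
    rw [D_expand D₂ u lam2 heig₂ v, norm_expand u v, Finset.mul_sum]
    refine Finset.sum_le_sum fun i _ => ?_
    by_cases hi : (i : ℕ) ≤ j
    · exact mul_le_mul_of_nonneg_right (hmono₂ (show i ≤ ⟨j, by omega⟩ from hi)) (sq_nonneg _)
    · rw [hcoef i (by omega)]; simp
  have hD1 : lam1 ⟨j, by omega⟩ * ‖w‖ ^ 2 ≤ D₁ w w := by
    rw [D_expand D₁ f lam1 heig₁ w, norm_expand f w, Finset.mul_sum]
    refine Finset.sum_le_sum fun i _ => ?_
    by_cases hi : (i : ℕ) < j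
    · rw [hfw i hi]; simp
    · exact mul_le_mul_of_nonneg_right
        (hmono₁ (show (⟨j, by omega⟩ : Fin n₁) ≤ i by simpa [Fin.le_def] using not_lt.mp hi))
        (sq_nonneg _)
  have h3 := hE₁ v hvspan hv0
  rw [← hw] at h3
  have h1 : lam1 ⟨j, by omega⟩ ≤ D₁ w w / ‖w‖ ^ 2 := (le_div_iff₀ hwpos).mpr hD1
  have h2 : D₂ v v / ‖v‖ ^ 2 ≤ lam2 ⟨j, by omega⟩ := (div_le_iff₀ hvpos).mpr hD2
  linarith



/-- **Two-sided eigenvalue comparison.**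
Let `D₁ ≥ 0`, `D₂ ≥ 0` be symmetric bilinear forms on finite-dimensional real inner product
spaces `H₁`, `H₂` with orthonormal eigenbases `f`, `u` and nondecreasing eigenvalue lists
`lam1`, `lam2` (so `λ_{j+1}(Dᵢ) = lamᵢ j` in `0`-based indexing).  Let
`l ≤ min(dim H₁, dim H₂)`, `Q₁ : H₁ → H₂`, `Q₂ : H₂ → H₁` linear, and `E₁`, `E₂` (finite)
bounds for the Rayleigh-quotient defects on the spans of the first `l` eigenvectors of
`D₂`, `D₁` respectively.  Then for `j = 1, …, l`:
`λⱼ(D₁) ≤ λⱼ(D₂) + E₁` and `λⱼ(D₂) ≤ λⱼ(D₁) + E₂`. -/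
theorem stmt7 {H₁ H₂ : Type*}
    [NormedAddCommGroup H₁] [InnerProductSpace ℝ H₁] [FiniteDimensional ℝ H₁]
    [NormedAddCommGroup H₂] [InnerProductSpace ℝ H₂] [FiniteDimensional ℝ H₂]
    (n₁ n₂ : ℕ) (hn₁ : Module.finrank ℝ H₁ = n₁) (hn₂ : Module.finrank ℝ H₂ = n₂)
    (D₁ : H₁ →ₗ[ℝ] H₁ →ₗ[ℝ] ℝ) (D₂ : H₂ →ₗ[ℝ] H₂ →ₗ[ℝ] ℝ)
    (hsymm₁ : ∀ u v, D₁ u v = D₁ v u) (hsymm₂ : ∀ u v, D₂ u v = D₂ v u)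
    (hpsd₁ : ∀ u, 0 ≤ D₁ u u) (hpsd₂ : ∀ u, 0 ≤ D₂ u u)
    (f : OrthonormalBasis (Fin n₁) ℝ H₁) (u : OrthonormalBasis (Fin n₂) ℝ H₂)
    (lam1 : Fin n₁ → ℝ) (lam2 : Fin n₂ → ℝ) (hmono₁ : Monotone lam1) (hmono₂ : Monotone lam2)
    (heig₁ : ∀ i v, D₁ (f i) v = lam1 i * (inner ℝ (f i) v : ℝ))
    (heig₂ : ∀ i v, D₂ (u i) v = lam2 i * (inner ℝ (u i) v : ℝ))
    (l : ℕ) (hl1 : 1 ≤ l) (hln₁ : l ≤ n₁) (hln₂ : l ≤ n₂)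
    (Q₁ : H₁ →ₗ[ℝ] H₂) (Q₂ : H₂ →ₗ[ℝ] H₁) (E₁ E₂ : ℝ)
    (hinj₁ : ∀ g ∈ Submodule.span ℝ ((fun i => f i) '' {i : Fin n₁ | (i : ℕ) < l}),
      Q₁ g = 0 → g = 0)
    (hinj₂ : ∀ v ∈ Submodule.span ℝ ((fun i => u i) '' {i : Fin n₂ | (i : ℕ) < l}),
      Q₂ v = 0 → v = 0)
    (hE₁ : ∀ v ∈ Submodule.span ℝ ((fun i => u i) '' {i : Fin n₂ | (i : ℕ) < l}), v ≠ 0 →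
      D₁ (Q₂ v) (Q₂ v) / ‖Q₂ v‖ ^ 2 - D₂ v v / ‖v‖ ^ 2 ≤ E₁)
    (hE₂ : ∀ g ∈ Submodule.span ℝ ((fun i => f i) '' {i : Fin n₁ | (i : ℕ) < l}), g ≠ 0 →
      D₂ (Q₁ g) (Q₁ g) / ‖Q₁ g‖ ^ 2 - D₁ g g / ‖g‖ ^ 2 ≤ E₂) :
    ∀ j : ℕ, ∀ hj : j < l,
      lam1 ⟨j, by omega⟩ ≤ lam2 ⟨j, by omega⟩ + E₁ ∧
      lam2 ⟨j, by omega⟩ ≤ lam1 ⟨j, by omega⟩ + E₂ := by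
  intro j hj
  exact ⟨eig_comp_aux D₁ D₂ f u lam1 lam2 hmono₁ hmono₂ heig₁ heig₂ l hln₁ hln₂ Q₂ E₁
      hinj₂ hE₁ j hj,
    eig_comp_aux D₂ D₁ u f lam2 lam1 hmono₂ hmono₁ heig₂ heig₁ l hln₂ hln₁ Q₁ E₂
      hinj₁ hE₂ j hj⟩
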